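/- In a min-length single-equation system where each variable language contains only words of a fixed length, if the system is stable (the concatenated languages of both sides of the equation are equal), then every single atom equivalence class agrees in some assignment, i.e., there exist an assignment ν with ν(x) ∈ Lang(x) for all x and a letter c such that ν(x)[i] = c for all atoms (x,i) in the class. -/

import Mathlib

/-- The atom (variable occurrence, index within it) lying at a given position
of a term. -/
def atomOf {X : Type*} (ℓ : X → ℕ) : List X → ℕ → Option (X × ℕ)
  | [], _ => none
  | x :: xs, p => if p < ℓ x then some (x, p) else atomOf ℓ xs (p - ℓ x)

/-- Two atoms are related if they are the left and right atoms of a common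
position of the equation `ys = zs`; the atom equivalence `∼` is the
equivalence generated by this relation. -/
def AtomRel {X : Type*} (ℓ : X → ℕ) (ys zs : List X) (a b : X × ℕ) : Prop :=
  ∃ p, atomOf ℓ ys p = some a ∧ atomOf ℓ zs p = some b

namespace AtomAgree

variable {X Γ : Type*} {ℓ : X → ℕ} {Lang : X → Language Γ}

lemma atomOf_idx_lt {L : List X} {p : ℕ} {b : X × ℕ} (h : atomOf ℓ L p = some b) :
    b.2 < ℓ b.1 := by
  induction L generalizing p with
  | nil => simp [atomOf] at h
  | cons x xs ih =>
    simp only [atomOf] at h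
    split at h
    · cases h; simpa using ‹p < ℓ x›
    · exact ih h

lemma atomOf_of_split {L₁ L₂ : List X} {x : X} {i : ℕ} (hi : i < ℓ x) :
    atomOf ℓ (L₁ ++ x :: L₂) ((L₁.map ℓ).sum + i) = some (x, i) := by
  induction L₁ with
  | nil => simp [atomOf, hi]
  | cons y L₁ ih =>
    have h1 : ¬ ((((y :: L₁).map ℓ).sum + i) < ℓ y) := by
      simp only [List.map_cons, List.sum_cons]; omega
    simp only [List.cons_append, atomOf, h1, if_false]
    have h2 : (((y :: L₁).map ℓ).sum + i) - ℓ y = (L₁.map ℓ).sum + i := by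
      simp only [List.map_cons, List.sum_cons]; omega
    rw [h2]; exact ih

lemma split_of_atomOf {L : List X} {p : ℕ} {b : X × ℕ} (h : atomOf ℓ L p = some b) :
    ∃ L₁ L₂, L = L₁ ++ b.1 :: L₂ ∧ p = (L₁.map ℓ).sum + b.2 ∧ b.2 < ℓ b.1 := by
  induction L generalizing p with
  | nil => simp [atomOf] at h
  | cons x xs ih =>
    simp only [atomOf] at h
    split at h
    · cases h
      exact ⟨[], xs, rfl, by simp, ‹_›⟩
    · obtain ⟨L₁, L₂, h1, h2, h3⟩ := ih h
      refine ⟨x :: L₁, L₂, by rw [h1]; rfl, ?_, h3⟩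
      have : ¬ p < ℓ x := ‹_›
      simp only [List.map_cons, List.sum_cons]
      omega


/-- Given good witnesses for each occurrence, build a word of the product
language whose letters at `Q`-positions are `c`. -/
lemma build_word (hlen : ∀ x, ∀ w ∈ Lang x, w.length = ℓ x) {c : Γ} (Q : ℕ → Prop) :
    ∀ (L : List X) (base : ℕ),
      (∀ L₁ y L₂, L = L₁ ++ y :: L₂ →
        ∃ u, u ∈ Lang y ∧ ∀ i, i < ℓ y → Q (base + ((L₁.map ℓ).sum + i)) →
          u[i]? = some c) →
      ∃ W, W ∈ (L.map Lang).prod ∧ W.length = (L.map ℓ).sum ∧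
        ∀ q, q < (L.map ℓ).sum → Q (base + q) → W[q]? = some c := by
  intro L
  induction L with
  | nil =>
    intro base _
    exact ⟨[], by simp [Language.mem_one], by simp, by simp⟩
  | cons y L' ih =>
    intro base H
    obtain ⟨u, hu, hugood⟩ := H [] y L' rfl
    obtain ⟨W', hW', hWlen, hWgood⟩ := ih (base + ℓ y) (by
      intro L₁ y' L₂ hsplit
      obtain ⟨u', hu', hg⟩ := H (y :: L₁) y' L₂ (by rw [hsplit]; rfl)
      refine ⟨u', hu', fun i hi hQ => hg i hi ?_⟩
      simpa [Nat.add_assoc, Nat.add_comm, Nat.add_left_comm] using hQ)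
    have hulen : u.length = ℓ y := hlen y u hu
    refine ⟨u ++ W', ?_, by simp [hulen, hWlen], ?_⟩
    · have : ((y :: L').map Lang).prod = Lang y * (L'.map Lang).prod := by simp
      rw [this]
      exact Language.mem_mul.mpr ⟨u, hu, W', hW', rfl⟩
    · intro q hq hQ
      by_cases hcase : q < ℓ y
      · rw [List.getElem?_append_left (by omega)]
        exact hugood q hcase (by simpa using hQ)
      · rw [List.getElem?_append_right (by omega)]
        rw [hulen]
        refine hWgood (q - ℓ y) (by simp [List.map_cons, List.sum_cons] at hq; omega) ?_
        have : base + ℓ y + (q - ℓ y) = base + q := by omega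
        rw [this]; exact hQ

/-- Read off the slice of a product-language word at a given occurrence. -/
lemma extract_word (hlen : ∀ x, ∀ w ∈ Lang x, w.length = ℓ x) :
    ∀ (L₁ : List X) (z : X) (L₂ : List X) (W : List Γ),
      W ∈ (((L₁ ++ z :: L₂).map Lang)).prod →
      ∃ u, u ∈ Lang z ∧ ∀ j, j < ℓ z → W[(L₁.map ℓ).sum + j]? = u[j]? := by
  intro L₁
  induction L₁ with
  | nil =>
    intro z L₂ W hW
    have : ((z :: L₂).map Lang).prod = Lang z * (L₂.map Lang).prod := by simp
    rw [List.nil_append, this] at hW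
    obtain ⟨u, hu, v, hv, rfl⟩ := Language.mem_mul.mp hW
    refine ⟨u, hu, fun j hj => ?_⟩
    have : j < u.length := by rw [hlen z u hu]; exact hj
    simp only [List.map_nil, List.sum_nil, Nat.zero_add]
    exact List.getElem?_append_left this
  | cons y L₁' ih =>
    intro z L₂ W hW
    have : (((y :: (L₁' ++ z :: L₂))).map Lang).prod
        = Lang y * ((L₁' ++ z :: L₂).map Lang).prod := by simp
    rw [List.cons_append, this] at hW
    obtain ⟨u₀, hu₀, W', hW', rfl⟩ := Language.mem_mul.mp hW
    obtain ⟨u, hu, hg⟩ := ih z L₂ W' hW'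
    refine ⟨u, hu, fun j hj => ?_⟩
    have hlen0 : u₀.length = ℓ y := hlen y u₀ hu₀
    have h1 : u₀.length ≤ ((y :: L₁').map ℓ).sum + j := by
      simp only [hlen0, List.map_cons, List.sum_cons]; omega
    rw [List.getElem?_append_right h1]
    have h2 : ((y :: L₁').map ℓ).sum + j - u₀.length = (L₁'.map ℓ).sum + j := by
      simp only [hlen0, List.map_cons, List.sum_cons]; omega
    rw [h2]
    exact hg j hj

/-- The core transfer: witnesses good on `Q` for every left occurrence yield a
witness good on `Q` for any given right occurrence. -/
lemma core_transfer (hlen : ∀ x, ∀ w ∈ Lang x, w.length = ℓ x) {c : Γ} (Q : ℕ → Prop) (es fs : List X)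
    (hst : (es.map Lang).prod = (fs.map Lang).prod)
    (htot : (es.map ℓ).sum = (fs.map ℓ).sum)
    (H : ∀ L₁ y L₂, es = L₁ ++ y :: L₂ →
      ∃ u, u ∈ Lang y ∧ ∀ i, i < ℓ y → Q ((L₁.map ℓ).sum + i) → u[i]? = some c) :
    ∀ M₁ z M₂, fs = M₁ ++ z :: M₂ →
      ∃ u, u ∈ Lang z ∧ ∀ j, j < ℓ z → Q ((M₁.map ℓ).sum + j) → u[j]? = some c := by
  intro M₁ z M₂ hfs
  obtain ⟨W, hWmem, hWlen, hWgood⟩ := build_word hlen Q es 0 (by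
    intro L₁ y L₂ h
    obtain ⟨u, hu, hg⟩ := H L₁ y L₂ h
    exact ⟨u, hu, fun i hi hQ => hg i hi (by simpa using hQ)⟩)
  rw [hst] at hWmem
  obtain ⟨u, hu, hg⟩ := extract_word hlen M₁ z M₂ W (by rw [← hfs]; exact hWmem)
  refine ⟨u, hu, fun j hj hQ => ?_⟩
  rw [← hg j hj]
  refine hWgood _ ?_ (by simpa using hQ)
  rw [htot, hfs]
  simp only [List.map_append, List.sum_append, List.map_cons, List.sum_cons]
  omega

lemma step_pullback (hlen : ∀ x, ∀ w ∈ Lang x, w.length = ℓ x) (c : Γ)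
    (es fs : List X)
    (hst : (es.map Lang).prod = (fs.map Lang).prod)
    (htot : (es.map ℓ).sum = (fs.map ℓ).sum)
    (InC : X × ℕ → Prop)
    (hrelC : ∀ q (y z' : X × ℕ), atomOf ℓ es q = some y → atomOf ℓ fs q = some z' →
      InC z' → InC y)
    (n : ℕ)
    (IHsmall : ∀ v (S : Finset ℕ), S.card < n → (∀ i ∈ S, i < ℓ v ∧ InC (v, i)) →
      ∃ u, u ∈ Lang v ∧ ∀ i ∈ S, u[i]? = some c)
    {p : ℕ} {b b₁ : X × ℕ}
    (hb : atomOf ℓ es p = some b) (hb₁ : atomOf ℓ fs p = some b₁)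
    (D₁ : Finset ℕ)
    (hD₁ : ∀ j ∈ D₁, j < ℓ b₁.1 ∧ InC (b₁.1, j))
    (hj0 : b₁.2 ∈ D₁) (hcard : D₁.card ≤ n) :
    ∃ D : Finset ℕ,
      (∀ i ∈ D, i < ℓ b.1 ∧ InC (b.1, i)) ∧ b.2 ∈ D ∧ D.card ≤ D₁.card ∧
      ((∃ u, u ∈ Lang b.1 ∧ ∀ i ∈ D, u[i]? = some c) →
        (∃ u, u ∈ Lang b₁.1 ∧ ∀ j ∈ D₁, u[j]? = some c)) ∧
      (D.card = D₁.card →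
        ∀ j ∈ D₁, ∃ i ∈ D, (j : ℤ) = (i : ℤ) + ((b₁.2 : ℤ) - (b.2 : ℤ))) := by
  classical
  obtain ⟨E₁, E₂, hes, hpE, hiE⟩ := split_of_atomOf hb
  obtain ⟨F₁, F₂, hfs, hpF, hjF⟩ := split_of_atomOf hb₁
  set offE := (E₁.map ℓ).sum with hoffE
  set offF := (F₁.map ℓ).sum with hoffF
  set D : Finset ℕ :=
    (Finset.range (ℓ b.1)).filter (fun i => ∃ j ∈ D₁, offE + i = offF + j) with hD
  have hmemD : ∀ i, i ∈ D ↔ (i < ℓ b.1 ∧ ∃ j ∈ D₁, offE + i = offF + j) := by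
    intro i; simp [hD]
  have hpeq : offE + b.2 = offF + b₁.2 := by omega
  -- validity of D
  have hvalid : ∀ i ∈ D, i < ℓ b.1 ∧ InC (b.1, i) := by
    intro i hi
    obtain ⟨hilt, j, hjD, hq⟩ := (hmemD i).mp hi
    refine ⟨hilt, ?_⟩
    have h1 : atomOf ℓ es (offE + i) = some (b.1, i) := by
      rw [hes]; exact atomOf_of_split hilt
    have h2 : atomOf ℓ fs (offE + i) = some (b₁.1, j) := by
      rw [hfs, hq]; exact atomOf_of_split (hD₁ j hjD).1
    exact hrelC _ _ _ h1 h2 (hD₁ j hjD).2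
  have hbD : b.2 ∈ D := (hmemD b.2).mpr ⟨hiE, b₁.2, hj0, hpeq⟩
  have hinj : Set.InjOn (fun i => offE + i - offF) ↑D := by
    intro i₁ h₁ i₂ h₂ he
    obtain ⟨-, j₁, -, hq₁⟩ := (hmemD i₁).mp h₁
    obtain ⟨-, j₂, -, hq₂⟩ := (hmemD i₂).mp h₂
    simp only at he
    omega
  have hmaps : ∀ i ∈ D, (offE + i - offF) ∈ D₁ := by
    intro i hi
    obtain ⟨-, j, hjD, hq⟩ := (hmemD i).mp hi
    have : offE + i - offF = j := by omega
    rwa [this]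
  have hcardD : D.card ≤ D₁.card := Finset.card_le_card_of_injOn _ hmaps hinj
  refine ⟨D, hvalid, hbD, hcardD, ?_, ?_⟩
  · -- the Good implication
    rintro ⟨uD, huD, hgD⟩
    have hQcore := core_transfer hlen (c := c)
      (fun q => ∃ j ∈ D₁, q = offF + j) es fs hst htot ?_ F₁ b₁.1 F₂ hfs
    · obtain ⟨u, hu, hg⟩ := hQcore
      refine ⟨u, hu, fun j hjD => ?_⟩
      exact hg j (hD₁ j hjD).1 ⟨j, hjD, rfl⟩
    · intro L₁ y L₂ hsplit
      by_cases hcase : (L₁.map ℓ).sum = offE ∧ y = b.1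
      · obtain ⟨h1, h2⟩ := hcase
        subst h2
        refine ⟨uD, huD, fun i hilt hQ => ?_⟩
        obtain ⟨j, hjD, hq⟩ := hQ
        rw [h1] at hq
        exact hgD i ((hmemD i).mpr ⟨hilt, j, hjD, by omega⟩)
      · set S : Finset ℕ :=
          (Finset.range (ℓ y)).filter (fun i => ∃ j ∈ D₁, (L₁.map ℓ).sum + i = offF + j)
          with hS
        have hmemS : ∀ i, i ∈ S ↔ (i < ℓ y ∧ ∃ j ∈ D₁, (L₁.map ℓ).sum + i = offF + j) := by
          intro i; simp [hS]
        have hSvalid : ∀ i ∈ S, i < ℓ y ∧ InC (y, i) := by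
          intro i hi
          obtain ⟨hilt, j, hjD, hq⟩ := (hmemS i).mp hi
          refine ⟨hilt, ?_⟩
          have h1 : atomOf ℓ es ((L₁.map ℓ).sum + i) = some (y, i) := by
            rw [hsplit]; exact atomOf_of_split hilt
          have h2 : atomOf ℓ fs ((L₁.map ℓ).sum + i) = some (b₁.1, j) := by
            rw [hfs, hq]; exact atomOf_of_split (hD₁ j hjD).1
          exact hrelC _ _ _ h1 h2 (hD₁ j hjD).2
        have hScard : S.card < n := by
          have hmapsS : ∀ i ∈ S, ((L₁.map ℓ).sum + i - offF) ∈ D₁.erase b₁.2 := by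
            intro i hi
            obtain ⟨hilt, j, hjD, hq⟩ := (hmemS i).mp hi
            have hij : (L₁.map ℓ).sum + i - offF = j := by omega
            rw [hij]
            refine Finset.mem_erase.mpr ⟨?_, hjD⟩
            intro hjeq
            subst hjeq
            have hqp : (L₁.map ℓ).sum + i = p := by omega
            have h1 : atomOf ℓ es p = some (y, i) := by
              rw [hsplit, ← hqp]; exact atomOf_of_split hilt
            rw [hb] at h1
            have hyb : y = b.1 ∧ i = b.2 := by
              have := h1.symm; injection this with h'; exact ⟨congrArg Prod.fst h', congrArg Prod.snd h'⟩
            obtain ⟨hy, hi2⟩ := hyb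
            apply hcase
            constructor
            · omega
            · exact hy
          have hinjS : Set.InjOn (fun i => (L₁.map ℓ).sum + i - offF) ↑S := by
            intro i₁ h₁ i₂ h₂ he
            obtain ⟨-, j₁, -, hq₁⟩ := (hmemS i₁).mp h₁
            obtain ⟨-, j₂, -, hq₂⟩ := (hmemS i₂).mp h₂
            simp only at he
            omega
          have h1 : S.card ≤ (D₁.erase b₁.2).card :=
            Finset.card_le_card_of_injOn _ hmapsS hinjS
          have h2 : (D₁.erase b₁.2).card < D₁.card :=
            Finset.card_erase_lt_of_mem hj0
          omega
        obtain ⟨u, hu, hg⟩ := IHsmall y S hScard hSvalid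
        refine ⟨u, hu, fun i hilt hQ => ?_⟩
        obtain ⟨j, hjD, hq⟩ := hQ
        exact hg i ((hmemS i).mpr ⟨hilt, j, hjD, hq⟩)
  · -- exact-shift case
    intro hcardeq j hj
    have himg : D.image (fun i => offE + i - offF) = D₁ := by
      apply Finset.eq_of_subset_of_card_le
      · intro j' hj'
        obtain ⟨i', hi', rfl⟩ := Finset.mem_image.mp hj'
        exact hmaps i' hi'
      · rw [Finset.card_image_of_injOn hinj, hcardeq]
    rw [← himg] at hj
    obtain ⟨i', hi', hji'⟩ := Finset.mem_image.mp hj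
    obtain ⟨-, j', hj'D, hq'⟩ := (hmemD i').mp hi'
    exact ⟨i', hi', by omega⟩

section Fixed
variable (ys zs : List X) (a : X × ℕ)

local notation "InC" => Relation.EqvGen (AtomRel ℓ ys zs) a
local notation "SRel" => (fun s t => AtomRel ℓ ys zs s t ∨ AtomRel ℓ ys zs t s)

lemma eqvgen_to_rtg {u v : X × ℕ} (h : Relation.EqvGen (AtomRel ℓ ys zs) u v) :
    Relation.ReflTransGen SRel u v := by
  induction h with
  | rel x y h => exact Relation.ReflTransGen.single (Or.inl h)
  | refl x => exact Relation.ReflTransGen.refl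
  | symm x y _ ih =>
    haveI : Std.Symm SRel := ⟨fun s t hst => Or.symm hst⟩
    exact Std.Symm.symm _ _ ih
  | trans x y z _ _ ih₁ ih₂ => exact ih₁.trans ih₂

lemma walk_lemma
    (hlen : ∀ x, ∀ w ∈ Lang x, w.length = ℓ x)
    (htot : (ys.map ℓ).sum = (zs.map ℓ).sum)
    (hstable : (ys.map Lang).prod = (zs.map Lang).prod)
    (c : Γ) (n : ℕ)
    (IHsmall : ∀ v (S : Finset ℕ), S.card < n → (∀ i ∈ S, i < ℓ v ∧ InC (v, i)) →
      ∃ u, u ∈ Lang v ∧ ∀ i ∈ S, u[i]? = some c) :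
    ∀ (b b' : X × ℕ), Relation.ReflTransGen SRel b b' →
      ∀ A : Finset ℕ, (∀ j ∈ A, j < ℓ b'.1 ∧ InC (b'.1, j)) → b'.2 ∈ A → A.card ≤ n →
      ∃ D : Finset ℕ,
        (∀ i ∈ D, i < ℓ b.1 ∧ InC (b.1, i)) ∧ b.2 ∈ D ∧ D.card ≤ A.card ∧
        ((∃ u, u ∈ Lang b.1 ∧ ∀ i ∈ D, u[i]? = some c) →
          (∃ u, u ∈ Lang b'.1 ∧ ∀ j ∈ A, u[j]? = some c)) ∧
        (D.card = A.card →
          ∀ j ∈ A, ∃ i ∈ D, (j : ℤ) = (i : ℤ) + ((b'.2 : ℤ) - (b.2 : ℤ))) := by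
  intro b b' hchain
  induction hchain using Relation.ReflTransGen.head_induction_on with
  | refl =>
    intro A hA hmem hcard
    exact ⟨A, hA, hmem, le_refl _, id, fun _ j hj => ⟨j, hj, by omega⟩⟩
  | head h' hrest ih =>
    rename_i bb cc
    intro A hA hmem hcard
    obtain ⟨D₁, hD₁, hmem₁, hcard₁, himp₁, hex₁⟩ := ih A hA hmem hcard
    have hstep : ∃ D : Finset ℕ,
        (∀ i ∈ D, i < ℓ bb.1 ∧ InC (bb.1, i)) ∧ bb.2 ∈ D ∧ D.card ≤ D₁.card ∧
        ((∃ u, u ∈ Lang bb.1 ∧ ∀ i ∈ D, u[i]? = some c) →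
          (∃ u, u ∈ Lang cc.1 ∧ ∀ j ∈ D₁, u[j]? = some c)) ∧
        (D.card = D₁.card →
          ∀ j ∈ D₁, ∃ i ∈ D, (j : ℤ) = (i : ℤ) + ((cc.2 : ℤ) - (bb.2 : ℤ))) := by
      rcases h' with h' | h'
      · obtain ⟨p, hp1, hp2⟩ := h'
        exact step_pullback hlen c ys zs hstable htot InC
          (fun q y z' h1 h2 hz =>
            Relation.EqvGen.trans _ _ _ hz
              (Relation.EqvGen.symm _ _ (Relation.EqvGen.rel _ _ ⟨q, h1, h2⟩)))
          n IHsmall hp1 hp2 D₁ hD₁ hmem₁ (le_trans hcard₁ hcard)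
      · obtain ⟨p, hp1, hp2⟩ := h'
        exact step_pullback hlen c zs ys hstable.symm htot.symm InC
          (fun q y z' h1 h2 hz =>
            Relation.EqvGen.trans _ _ _ hz (Relation.EqvGen.rel _ _ ⟨q, h2, h1⟩))
          n IHsmall hp2 hp1 D₁ hD₁ hmem₁ (le_trans hcard₁ hcard)
    obtain ⟨D, hD, hmemD, hcardD, himpD, hexD⟩ := hstep
    refine ⟨D, hD, hmemD, le_trans hcardD hcard₁, fun h => himp₁ (himpD h), ?_⟩
    intro hceq j hj
    have h1 : D.card = D₁.card := by omega
    have h2 : D₁.card = A.card := by omega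
    obtain ⟨j₁, hj₁, hc₁⟩ := hex₁ h2 j hj
    obtain ⟨i, hi, hc₂⟩ := hexD h1 j₁ hj₁
    exact ⟨i, hi, by omega⟩

lemma atom_idx_lt_of_inc (ha : a.2 < ℓ a.1) {b : X × ℕ} (h : InC b) : b.2 < ℓ b.1 := by
  have key : ∀ u v : X × ℕ, Relation.EqvGen (AtomRel ℓ ys zs) u v →
      ((u.2 < ℓ u.1) ↔ (v.2 < ℓ v.1)) := by
    intro u v h
    induction h with
    | rel x y hxy =>
      obtain ⟨p, h1, h2⟩ := hxy
      exact iff_of_true (atomOf_idx_lt h1) (atomOf_idx_lt h2)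
    | refl x => exact Iff.rfl
    | symm x y _ ih => exact ih.symm
    | trans x y z _ _ ih₁ ih₂ => exact ih₁.trans ih₂
  exact (key a b h).mp ha

lemma main_good
    (hlen : ∀ x, ∀ w ∈ Lang x, w.length = ℓ x)
    (htot : (ys.map ℓ).sum = (zs.map ℓ).sum)
    (hstable : (ys.map Lang).prod = (zs.map Lang).prod)
    (c : Γ) (hne : ∀ x, ∃ w, w ∈ Lang x)
    (hbase : ∃ u, u ∈ Lang a.1 ∧ u[a.2]? = some c) :
    ∀ n (v : X) (A : Finset ℕ), A.card = n → (∀ i ∈ A, i < ℓ v ∧ InC (v, i)) →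
      ∃ u, u ∈ Lang v ∧ ∀ i ∈ A, u[i]? = some c := by
  intro n
  induction n using Nat.strong_induction_on with
  | _ n IHn =>
  have IHsmall : ∀ (v : X) (S : Finset ℕ), S.card < n →
      (∀ i ∈ S, i < ℓ v ∧ InC (v, i)) →
      ∃ u, u ∈ Lang v ∧ ∀ i ∈ S, u[i]? = some c :=
    fun v S hS hval => IHn S.card hS v S rfl hval
  suffices h : ∀ s (v : X) (A : Finset ℕ), A.card = n → A.sum id = s →
      (∀ i ∈ A, i < ℓ v ∧ InC (v, i)) →
      ∃ u, u ∈ Lang v ∧ ∀ i ∈ A, u[i]? = some c by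
    intro v A hcard hval
    exact h (A.sum id) v A hcard rfl hval
  intro s
  induction s using Nat.strong_induction_on with
  | _ s IHs =>
  intro v A hcard hsum hval
  rcases Finset.eq_empty_or_nonempty A with rfl | hAne
  · obtain ⟨w, hw⟩ := hne v
    exact ⟨w, hw, by simp⟩
  -- A nonempty
  have hn1 : 1 ≤ n := by
    rw [← hcard]; exact Finset.card_pos.mpr hAne
  set m := A.min' hAne with hm
  have hmA : m ∈ A := A.min'_mem hAne
  by_cases hone : A.card = 1
  · -- singleton: walk from the base atom a
    have hAsing : A = {m} := by
      obtain ⟨x, hx⟩ := Finset.card_eq_one.mp hone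
      have hmx : m = x := by simpa [hx] using hmA
      rw [hx, hmx]
    have hchain : Relation.ReflTransGen SRel a (v, m) :=
      eqvgen_to_rtg ys zs (hval m hmA).2
    obtain ⟨D, hD, hmemD, hcardD, himpD, -⟩ :=
      walk_lemma ys zs a hlen htot hstable c n IHsmall a (v, m) hchain A
        (by intro j hj; exact hval j hj) (by simpa [hAsing]) (by omega)
    apply himpD
    have hDsing : D = {a.2} := by
      have : D.card ≤ 1 := by omega
      have hss : {a.2} ⊆ D := by simp [Finset.singleton_subset_iff, hmemD]
      refine (Finset.eq_of_subset_of_card_le hss ?_).symm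
      rw [Finset.card_singleton]; omega
    obtain ⟨u, hu, hug⟩ := hbase
    exact ⟨u, hu, by intro i hi; rw [hDsing] at hi; simp at hi; rwa [hi]⟩
  · -- at least two elements: drift
    have h2 : 2 ≤ A.card := by
      have := Finset.card_pos.mpr hAne
      omega
    have hAe : (A.erase m).Nonempty := by
      rw [← Finset.card_pos, Finset.card_erase_of_mem hmA]; omega
    set m' := (A.erase m).min' hAe with hm'
    have hm'A : m' ∈ A := Finset.mem_of_mem_erase ((A.erase m).min'_mem hAe)
    have hm'ne : m' ≠ m := Finset.ne_of_mem_erase ((A.erase m).min'_mem hAe)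
    have hmm' : m < m' := lt_of_le_of_ne (A.min'_le m' hm'A) (Ne.symm hm'ne)
    have hchain : Relation.ReflTransGen SRel (v, m) (v, m') :=
      eqvgen_to_rtg ys zs
        (Relation.EqvGen.trans _ _ _
          (Relation.EqvGen.symm _ _ (hval m hmA).2) (hval m' hm'A).2)
    obtain ⟨D, hD, hmemD, hcardD, himpD, hexD⟩ :=
      walk_lemma ys zs a hlen htot hstable c n IHsmall (v, m) (v, m') hchain A
        (by intro j hj; exact hval j hj) hm'A (by omega)
    by_cases hceq : D.card = A.card
    · -- exact shift: use sum induction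
      set g := m' - m with hg
      have hshift : ∀ j ∈ A, g ≤ j ∧ (j - g) ∈ D := by
        intro j hj
        obtain ⟨i, hi, hcast⟩ := hexD hceq j hj
        have h1 : j = i + g := by omega
        constructor
        · omega
        · have : j - g = i := by omega
          rwa [this]
      have hinj2 : Set.InjOn (fun j => j - g) ↑A := by
        intro j₁ h₁ j₂ h₂ he
        have := (hshift j₁ h₁).1
        have := (hshift j₂ h₂).1
        simp only at he
        omega
      have himg : A.image (fun j => j - g) = D := by
        apply Finset.eq_of_subset_of_card_le
        · intro x hx
          obtain ⟨j, hj, rfl⟩ := Finset.mem_image.mp hx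
          exact (hshift j hj).2
        · exact le_of_eq (hceq.trans (Finset.card_image_of_injOn hinj2).symm)
      have hsumlt : D.sum id < A.sum id := by
        rw [← himg, Finset.sum_image (by
          intro j₁ h₁ j₂ h₂ he
          have := (hshift j₁ h₁).1
          have := (hshift j₂ h₂).1
          simp only at he
          omega)]
        apply Finset.sum_lt_sum_of_nonempty hAne
        intro j hj
        have h1 := (hshift j hj).1
        have hgpos : 1 ≤ g := by omega
        simp only [id]
        omega
      obtain ⟨u, hu, hug⟩ := IHs (D.sum id) (by omega) v D (by omega) rfl hD
      exact himpD ⟨u, hu, hug⟩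
    · -- strictly smaller: use card induction
      exact himpD (IHsmall v D (by omega) hD)

end Fixed

end AtomAgree

/-- In a min-length single-equation system (each `Lang x` nonempty with all
words of the fixed length `ℓ x`), if the system is stable
(`Lang(y₁)···Lang(yₙ) = Lang(z₁)···Lang(zₘ)`), then every single atom
equivalence class agrees in some assignment: there are `ν` with
`ν x ∈ Lang x` for all `x` and a letter `c` such that `ν(x)[i] = c` for all
atoms `(x,i)` of the class. -/
theorem atom_class_agrees_of_stable {X Γ : Type*}
    (ℓ : X → ℕ) (ys zs : List X) (Lang : X → Language Γ)
    (hne : ∀ x, ∃ w, w ∈ Lang x)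
    (hlen : ∀ x, ∀ w ∈ Lang x, w.length = ℓ x)
    (htot : (ys.map ℓ).sum = (zs.map ℓ).sum)
    (hstable : (ys.map Lang).prod = (zs.map Lang).prod) :
    ∀ a : X × ℕ, a.2 < ℓ a.1 →
      ∃ (ν : X → List Γ) (c : Γ), (∀ x, ν x ∈ Lang x) ∧
        ∀ b : X × ℕ, Relation.EqvGen (AtomRel ℓ ys zs) a b →
          (ν b.1)[b.2]? = some c := by
  intro a ha
  classical
  obtain ⟨w₀, hw₀⟩ := hne a.1
  have halt : a.2 < w₀.length := by rw [hlen a.1 w₀ hw₀]; exact ha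
  set c := w₀.get ⟨a.2, halt⟩ with hc
  have hbase : ∃ u, u ∈ Lang a.1 ∧ u[a.2]? = some c :=
    ⟨w₀, hw₀, List.getElem?_eq_getElem halt⟩
  have hgood : ∀ v, ∃ u, u ∈ Lang v ∧
      ∀ i ∈ (Finset.range (ℓ v)).filter
        (fun i => Relation.EqvGen (AtomRel ℓ ys zs) a (v, i)),
      u[i]? = some c := by
    intro v
    refine AtomAgree.main_good ys zs a hlen htot hstable c hne hbase _ v _ rfl ?_
    intro i hi
    simp only [Finset.mem_filter, Finset.mem_range] at hi
    exact ⟨hi.1, hi.2⟩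
  refine ⟨fun v => (hgood v).choose, c, fun v => (hgood v).choose_spec.1, ?_⟩
  intro b hb
  have hblt : b.2 < ℓ b.1 := AtomAgree.atom_idx_lt_of_inc ys zs a ha hb
  refine (hgood b.1).choose_spec.2 b.2 ?_
  simp only [Finset.mem_filter, Finset.mem_range]
  exact ⟨hblt, hb⟩
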